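/- If a disc of radius s is surrounded by a corona consisting entirely of n mutually consecutive tangent discs of radius r (r > s), then n·arccos(1 - 2r^2/(r+s)^2) = 2π; consequently, for the corona of five r-discs (n=5), the ratio t = s/r satisfies 5t^4 + 20t^3 + 10t^2 - 20t + 1 = 0. -/

import Mathlib

set_option maxHeartbeats 1000000


/-- If a disc of radius `s` is surrounded by a corona of `n` consecutively tangent discs of
radius `r` (placed at strictly increasing angles within one turn around the central disc, no
two of them overlapping), then `n · arccos(1 - 2r²/(r+s)²) = 2π`; consequently for `n = 5`
the ratio `t = s/r` satisfies `5t⁴ + 20t³ + 10t² - 20t + 1 = 0`. -/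
theorem stmt_13 (r s : ℝ) (hs : 0 < s) (hsr : s < r) (n : ℕ) (hn : 3 ≤ n)
    (p : EuclideanSpace ℝ (Fin 2)) (c : Fin n → EuclideanSpace ℝ (Fin 2)) (θ : Fin n → ℝ)
    (hpos : ∀ i, c i = p + (s+r) • (EuclideanSpace.equiv (Fin 2) ℝ).symm
      ![Real.cos (θ i), Real.sin (θ i)])
    (hmono : StrictMono θ)
    (hwindow : ∀ i j : Fin n, θ i < θ j + 2 * Real.pi)
    (htan : ∀ i : Fin n, dist (c i) (c ⟨(i.val + 1) % n, Nat.mod_lt _ i.pos⟩) = 2*r)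
    (hsep : ∀ i j : Fin n, i ≠ j → 2*r ≤ dist (c i) (c j)) :
    (n : ℝ) * Real.arccos (1 - 2*r^2/(r+s)^2) = 2 * Real.pi ∧
    (n = 5 → 5*(s/r)^4 + 20*(s/r)^3 + 10*(s/r)^2 - 20*(s/r) + 1 = 0) := by
  have hr : 0 < r := hs.trans hsr
  have hrs : (0:ℝ) < r + s := by linarith
  have pi_pos := Real.pi_pos
  set α := Real.arccos (1 - 2*r^2/(r+s)^2) with hαdef
  -- basic facts about α
  have hx1 : 1 - 2*r^2/(r+s)^2 < 1 := by
    have : 0 < 2*r^2/(r+s)^2 := by positivity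
    linarith
  have hxm1 : -1 < 1 - 2*r^2/(r+s)^2 := by
    have h2 : 2*r^2/(r+s)^2 < 2 := by
      rw [div_lt_iff₀ (by positivity)]
      nlinarith
    linarith
  have hα0 : 0 < α := Real.arccos_pos.2 hx1
  have hcosα : Real.cos α = 1 - 2*r^2/(r+s)^2 :=
    Real.cos_arccos (by linarith) (by linarith)
  have hαπ : α < Real.pi := by
    rcases lt_or_eq_of_le (Real.arccos_le_pi (1 - 2*r^2/(r+s)^2)) with h | h
    · exact h
    · exfalso
      have : Real.cos α = -1 := by rw [hαdef, h, Real.cos_pi]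
      rw [hcosα] at this
      linarith
  have hsinhalf : Real.sin (α/2) = r/(r+s) := by
    have h1 : Real.sin (α/2)^2 = (r/(r+s))^2 := by
      have := Real.sin_sq_eq_half_sub (α/2)
      rw [show 2*(α/2) = α by ring, hcosα] at this
      rw [this]
      field_simp
      ring
    have h2 : 0 ≤ Real.sin (α/2) :=
      Real.sin_nonneg_of_nonneg_of_le_pi (by linarith) (by linarith)
    have h3 : 0 < r/(r+s) := by positivity
    nlinarith [h1, h2, h3]
  -- distance formula
  have hdist : ∀ i j : Fin n, dist (c i) (c j) = 2*(r+s)*|Real.sin ((θ i - θ j)/2)| := by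
    intro i j
    have hco : ∀ (v : Fin 2 → ℝ) (k : Fin 2),
        (EuclideanSpace.equiv (Fin 2) ℝ).symm v k = v k := fun v k => rfl
    rw [hpos i, hpos j, EuclideanSpace.dist_eq]
    simp only [PiLp.add_apply, PiLp.smul_apply, smul_eq_mul, hco,
      Fin.sum_univ_two, Real.dist_eq, Matrix.cons_val_zero, Matrix.cons_val_one, Matrix.head_cons]
    rw [sq_abs, sq_abs]
    rw [show (p 0 + (s+r)*Real.cos (θ i) - (p 0 + (s+r)*Real.cos (θ j)))^2
        + (p 1 + (s+r)*Real.sin (θ i) - (p 1 + (s+r)*Real.sin (θ j)))^2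
        = (2*(r+s)*|Real.sin ((θ i - θ j)/2)|)^2 from by
      rw [mul_pow, mul_pow, sq_abs]
      have h1 := Real.sin_sq_eq_half_sub ((θ i - θ j)/2)
      rw [show 2*((θ i - θ j)/2) = θ i - θ j by ring, Real.cos_sub] at h1
      have p1 := Real.sin_sq_add_cos_sq (θ i)
      have p2 := Real.sin_sq_add_cos_sq (θ j)
      linear_combination (s+r)^2 * p1 + (s+r)^2 * p2 - 4*(r+s)^2 * h1]
    exact Real.sqrt_sq (by positivity)
  -- gap dichotomy
  have hgap : ∀ x : ℝ, 0 < x → x < 2*Real.pi → 2*(r+s)*|Real.sin (x/2)| = 2*r →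
      x = α ∨ x = 2*Real.pi - α := by
    intro x hx0 hx2 h
    have hs2 : 0 ≤ Real.sin (x/2) :=
      Real.sin_nonneg_of_nonneg_of_le_pi (by linarith) (by linarith)
    rw [abs_of_nonneg hs2] at h
    have hsx : Real.sin (x/2) = Real.sin (α/2) := by
      rw [hsinhalf]
      field_simp
      linarith
    by_cases hhalf : x/2 ≤ Real.pi/2
    · left
      have := Real.injOn_sin (Set.mem_Icc.2 ⟨by linarith, hhalf⟩)
        (Set.mem_Icc.2 ⟨by linarith, by linarith⟩) hsx
      linarith
    · right
      push_neg at hhalf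
      have hsx2 : Real.sin (Real.pi - x/2) = Real.sin (α/2) := by
        rw [Real.sin_pi_sub]; exact hsx
      have := Real.injOn_sin (Set.mem_Icc.2 ⟨by linarith, by linarith⟩)
        (Set.mem_Icc.2 ⟨by linarith, by linarith⟩) hsx2
      linarith
  -- consecutive gaps
  have hθgap : ∀ k : ℕ, (hk : k + 1 < n) →
      θ ⟨k+1, hk⟩ - θ ⟨k, Nat.lt_of_succ_lt hk⟩ = α ∨
      θ ⟨k+1, hk⟩ - θ ⟨k, Nat.lt_of_succ_lt hk⟩ = 2*Real.pi - α := by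
    intro k hk
    have ht := htan ⟨k, Nat.lt_of_succ_lt hk⟩
    have hidx : (⟨(k+1) % n, Nat.mod_lt _ (Fin.pos ⟨k, Nat.lt_of_succ_lt hk⟩)⟩ : Fin n)
        = ⟨k+1, hk⟩ := by
      ext; simp [Nat.mod_eq_of_lt hk]
    rw [hidx, hdist] at ht
    have hm : θ ⟨k, Nat.lt_of_succ_lt hk⟩ < θ ⟨k+1, hk⟩ :=
      hmono (by simp [Fin.mk_lt_mk])
    have hw := hwindow ⟨k+1, hk⟩ ⟨k, Nat.lt_of_succ_lt hk⟩
    apply hgap _ (by linarith) (by linarith)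
    rw [show (θ ⟨k+1, hk⟩ - θ ⟨k, Nat.lt_of_succ_lt hk⟩)/2
        = -((θ ⟨k, Nat.lt_of_succ_lt hk⟩ - θ ⟨k+1, hk⟩)/2) by ring, Real.sin_neg, abs_neg]
    exact ht
  -- telescoping
  have h1n : 1 ≤ n := by omega
  set f : ℕ → ℝ := fun k => θ ⟨min k (n-1), by omega⟩ with hf
  have hfgap : ∀ k ∈ Finset.range (n-1), f (k+1) - f k = α ∨ f (k+1) - f k = 2*Real.pi - α := by
    intro k hk
    rw [Finset.mem_range] at hk
    have hk1 : k + 1 < n := by omega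
    have e1 : f (k+1) = θ ⟨k+1, hk1⟩ := by
      simp only [hf]; congr 1; ext; simp; omega
    have e2 : f k = θ ⟨k, Nat.lt_of_succ_lt hk1⟩ := by
      simp only [hf]; congr 1; ext; simp; omega
    rw [e1, e2]
    exact hθgap k hk1
  have htel : ∑ k ∈ Finset.range (n-1), (f (k+1) - f k) = θ ⟨n-1, by omega⟩ - θ ⟨0, by omega⟩ := by
    rw [Finset.sum_range_sub]
    have e1 : f (n-1) = θ ⟨n-1, by omega⟩ := by
      simp only [hf]; congr 1; ext; simp
    have e2 : f 0 = θ ⟨0, by omega⟩ := by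
      simp only [hf]; congr 1
    rw [e1, e2]
  have hlt2pi : θ (⟨n-1, by omega⟩ : Fin n) - θ ⟨0, by omega⟩ < 2*Real.pi := by
    have := hwindow ⟨n-1, by omega⟩ ⟨0, by omega⟩
    linarith
  -- all gaps equal α
  have hallα : ∀ k ∈ Finset.range (n-1), f (k+1) - f k = α := by
    by_contra hcon
    push_neg at hcon
    obtain ⟨k0, hk0, hk0ne⟩ := hcon
    have hk0big : f (k0+1) - f k0 = 2*Real.pi - α := (hfgap k0 hk0).resolve_left hk0ne
    have hrest : ∀ k ∈ (Finset.range (n-1)).erase k0, α ≤ f (k+1) - f k := by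
      intro k hk
      rcases hfgap k (Finset.mem_of_mem_erase hk) with h | h
      · exact h.ge
      · rw [h]; linarith
    have hsum : ∑ k ∈ Finset.range (n-1), (f (k+1) - f k)
        = (f (k0+1) - f k0) + ∑ k ∈ (Finset.range (n-1)).erase k0, (f (k+1) - f k) :=
      (Finset.add_sum_erase _ _ hk0).symm
    have hcard : ((Finset.range (n-1)).erase k0).card = n - 2 := by
      rw [Finset.card_erase_of_mem hk0, Finset.card_range]
      omega
    have hge : (↑(n-2) : ℝ) * α ≤ ∑ k ∈ (Finset.range (n-1)).erase k0, (f (k+1) - f k) := by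
      have := Finset.card_nsmul_le_sum ((Finset.range (n-1)).erase k0)
        (fun k => f (k+1) - f k) α hrest
      rwa [hcard, nsmul_eq_mul] at this
    have hn2 : (1:ℝ) ≤ (↑(n-2) : ℝ) := by
      have : 1 ≤ n - 2 := by omega
      exact_mod_cast this
    have : 2*Real.pi ≤ θ (⟨n-1, by omega⟩ : Fin n) - θ ⟨0, by omega⟩ := by
      rw [← htel, hsum, hk0big]
      nlinarith [hge, hn2, hα0]
    linarith
  have hsumα : θ (⟨n-1, by omega⟩ : Fin n) - θ ⟨0, by omega⟩ = (↑(n-1) : ℝ) * α := by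
    rw [← htel, Finset.sum_congr rfl hallα, Finset.sum_const, Finset.card_range, nsmul_eq_mul]
  -- closing gap
  have hlast := htan ⟨n-1, by omega⟩
  have hidx0 : (⟨(n-1+1) % n, Nat.mod_lt _ (Fin.pos ⟨n-1, by omega⟩)⟩ : Fin n)
      = ⟨0, by omega⟩ := by
    ext
    simp only []
    show (n-1+1) % n = 0
    rw [Nat.sub_add_cancel h1n, Nat.mod_self]
  rw [hidx0, hdist] at hlast
  have h0lt : θ (⟨0, by omega⟩ : Fin n) < θ ⟨n-1, by omega⟩ :=
    hmono (by simp [Fin.mk_lt_mk]; omega)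
  have hclose : θ (⟨n-1, by omega⟩ : Fin n) - θ ⟨0, by omega⟩ = α ∨
      θ (⟨n-1, by omega⟩ : Fin n) - θ ⟨0, by omega⟩ = 2*Real.pi - α := by
    apply hgap _ (by linarith) hlt2pi
    rw [show (θ (⟨n-1, by omega⟩ : Fin n) - θ ⟨0, by omega⟩)/2
        = (θ (⟨n-1, by omega⟩ : Fin n) - θ ⟨0, by omega⟩)/2 from rfl]
    exact hlast
  have hn1R : (↑(n-1) : ℝ) = (n:ℝ) - 1 := by
    have : (1:ℕ) ≤ n := h1n
    push_cast [Nat.cast_sub this]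
    ring
  have hnα : (n : ℝ) * α = 2 * Real.pi := by
    rcases hclose with h | h
    · rw [hsumα, hn1R] at h
      have hnge : (3:ℝ) ≤ (n:ℝ) := by exact_mod_cast hn
      exfalso
      have key : 3*α ≤ (n:ℝ)*α := mul_le_mul_of_nonneg_right hnge hα0.le
      have h' : (n:ℝ)*α = 2*α := by linear_combination h
      linarith
    · rw [hsumα, hn1R] at h
      linarith
  refine ⟨hnα, fun hn5 => ?_⟩
  -- polynomial for n = 5
  subst hn5
  have hα25 : α = 2*Real.pi/5 := by
    have : (5:ℝ) * α = 2 * Real.pi := by exact_mod_cast hnα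
    linarith
  have hc25 : Real.cos (2*Real.pi/5) = (Real.sqrt 5 - 1)/4 := by
    have h2 : Real.cos (2*(Real.pi/5)) = 2 * Real.cos (Real.pi/5)^2 - 1 := Real.cos_two_mul _
    rw [Real.cos_pi_div_five] at h2
    have h5 : Real.sqrt 5 ^ 2 = 5 := Real.sq_sqrt (by norm_num)
    rw [show 2*(Real.pi/5) = 2*Real.pi/5 by ring] at h2
    rw [h2]
    nlinarith [h5]
  have hE : 1 - 2*r^2/(r+s)^2 = (Real.sqrt 5 - 1)/4 := by
    rw [← hcosα, hα25, hc25]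
  have h5 : Real.sqrt 5 ^ 2 = 5 := Real.sq_sqrt (by norm_num)
  have hsq : (5 - 8*r^2/(r+s)^2)^2 = 5 := by
    have hE' : Real.sqrt 5 = 5 - 8*r^2/(r+s)^2 := by
      field_simp at hE ⊢
      nlinarith [hE]
    rw [← hE']
    exact h5
  have hrne : r ≠ 0 := ne_of_gt hr
  have hrsne : r + s ≠ 0 := ne_of_gt hrs
  field_simp at hsq
  have hkey : 5*((r+s)^2)^2 - 20*r^2*(r+s)^2 + 16*r^4 = 0 := by linear_combination hsq/4
  field_simp
  linear_combination hkey
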